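/- arXiv:1310.7431 — 3 statements merged into one kernel-verified Lean document; each statement's English description precedes it below -/
import Mathlib

section
/- For all t > 0 and u > 0, l(t,u) ≤ t² u⁻² · sup_{s ∈ [0,1]} (1/(2√π)) e^{-1/(4s)} s^{-3/2}, where l(t,u) = ∫₀ᵗ (t - r) · (u/(2√π)) · r^{-3/2} · e^{-u²/(4r)} dr. -/
open Set

lemma key_prof (s : ℝ) (hs : 0 < s) :
    Real.exp (-1/(4*s)) * s ^ (-(3:ℝ)/2) ≤ Real.exp (-(3:ℝ)/2) * (6:ℝ) ^ ((3:ℝ)/2) := by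
  set y : ℝ := 1/(6*s) with hy
  have hy0 : 0 < y := by positivity
  have h1 : y ≤ Real.exp (y - 1) := by
    have := Real.add_one_le_exp (y - 1); linarith
  have h2 : y ^ ((3:ℝ)/2) ≤ (Real.exp (y - 1)) ^ ((3:ℝ)/2) :=
    Real.rpow_le_rpow hy0.le h1 (by norm_num)
  have e1 : (Real.exp (y - 1)) ^ ((3:ℝ)/2) = Real.exp (1/(4*s) - 3/2) := by
    rw [← Real.exp_mul]
    congr 1
    field_simp [hy]
    have hys : y * s = 1/6 := by
      rw [hy, div_mul_eq_mul_div, one_mul, div_eq_div_iff (by positivity) (by norm_num)]; ring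
    linear_combination 12 * hys
  have hne : -(3:ℝ)/2 = -((3:ℝ)/2) := by ring
  have e2 : y ^ ((3:ℝ)/2) = s ^ (-(3:ℝ)/2) * (6:ℝ) ^ (-(3:ℝ)/2) := by
    rw [hy, Real.div_rpow (by norm_num) (by positivity), Real.one_rpow,
      Real.mul_rpow (by norm_num) hs.le, hne,
      Real.rpow_neg hs.le, Real.rpow_neg (by norm_num : (0:ℝ) ≤ 6)]
    rw [one_div, mul_inv]
    ring_nf
  rw [e1, e2] at h2
  have h3 : Real.exp (-1/(4*s)) * (6:ℝ)^((3:ℝ)/2) * (s ^ (-(3:ℝ)/2) * (6:ℝ) ^ (-(3:ℝ)/2))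
      ≤ Real.exp (-1/(4*s)) * (6:ℝ)^((3:ℝ)/2) * Real.exp (1/(4*s) - 3/2) :=
    mul_le_mul_of_nonneg_left h2 (by positivity)
  calc Real.exp (-1/(4*s)) * s ^ (-(3:ℝ)/2)
      = Real.exp (-1/(4*s)) * (6:ℝ)^((3:ℝ)/2) * (s ^ (-(3:ℝ)/2) * (6:ℝ) ^ (-(3:ℝ)/2)) := by
        rw [hne, Real.rpow_neg (by norm_num : (0:ℝ) ≤ 6)]
        have h6 : (6:ℝ)^((3:ℝ)/2) ≠ 0 := by positivity
        field_simp
    _ ≤ Real.exp (-1/(4*s)) * (6:ℝ)^((3:ℝ)/2) * Real.exp (1/(4*s) - 3/2) := h3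
    _ = Real.exp (-(3:ℝ)/2) * (6:ℝ) ^ ((3:ℝ)/2) := by
        rw [mul_comm (Real.exp (-1/(4*s))) _, mul_assoc, ← Real.exp_add]
        rw [mul_comm]
        congr 1
        ring_nf

theorem stmt1 (t u : ℝ) (ht : 0 < t) (hu : 0 < u) :
    (∫ r in (0:ℝ)..t,
        (t - r) * (1 / (2 * Real.sqrt Real.pi)) * u * r ^ (-(3:ℝ)/2) * Real.exp (-u^2 / (4*r)))
      ≤ t^2 * u ^ (-(2:ℝ)) *
        sSup ((fun s => (1 / (2 * Real.sqrt Real.pi)) * Real.exp (-1/(4*s)) * s ^ (-(3:ℝ)/2)) ''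
          Icc (0:ℝ) 1) := by
  set c : ℝ := 1 / (2 * Real.sqrt Real.pi) with hc
  have hc0 : 0 < c := by
    rw [hc]; positivity
  set F : ℝ → ℝ := fun s => c * Real.exp (-1/(4*s)) * s ^ (-(3:ℝ)/2) with hF
  set K : ℝ := c * (Real.exp (-(3:ℝ)/2) * (6:ℝ) ^ ((3:ℝ)/2)) with hK
  have hK0 : 0 < K := by rw [hK]; positivity
  -- F is bounded by K everywhere on [0,∞)
  have hFle : ∀ s : ℝ, 0 ≤ s → F s ≤ K := by
    intro s hs
    rcases eq_or_lt_of_le hs with h | h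
    · simp [hF, ← h, Real.zero_rpow (by norm_num : -(3:ℝ)/2 ≠ 0)]
      exact hK0.le
    · rw [hF, hK]
      simp only
      rw [mul_assoc]
      exact mul_le_mul_of_nonneg_left (key_prof s h) hc0.le
  set M : ℝ := sSup (F '' Icc (0:ℝ) 1) with hM
  have hbdd : BddAbove (F '' Icc (0:ℝ) 1) := by
    refine ⟨K, ?_⟩
    rintro x ⟨s, hs, rfl⟩
    exact hFle s hs.1
  -- F (1/6) = K
  have hF6 : F (1/6) = K := by
    rw [hF, hK]
    simp only
    have e1 : -1/(4*((1:ℝ)/6)) = -(3:ℝ)/2 := by norm_num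
    have e2 : ((1:ℝ)/6) ^ (-(3:ℝ)/2) = (6:ℝ) ^ ((3:ℝ)/2) := by
      rw [(by ring : -(3:ℝ)/2 = -((3:ℝ)/2)), Real.rpow_neg (by norm_num),
        Real.div_rpow (by norm_num) (by norm_num), Real.one_rpow, one_div, inv_inv]
    rw [e1, e2, mul_assoc]
  have hKM : K ≤ M := by
    rw [← hF6]
    exact le_csSup hbdd ⟨1/6, by norm_num, rfl⟩
  have hu2 : (0:ℝ) < u ^ (-(2:ℝ)) := Real.rpow_pos_of_pos hu _
  -- pointwise bound of the integrand
  have hpt : ∀ r ∈ Icc (0:ℝ) t,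
      (t - r) * c * u * r ^ (-(3:ℝ)/2) * Real.exp (-u^2 / (4*r))
        ≤ (t - r) * (u ^ (-(2:ℝ)) * K) := by
    intro r hr
    rcases eq_or_lt_of_le hr.1 with h | h
    · rw [← h]
      simp [Real.zero_rpow (by norm_num : -(3:ℝ)/2 ≠ 0)]
      positivity
    · have hsub : 0 ≤ t - r := by linarith [hr.2]
      have hkey : c * u * r ^ (-(3:ℝ)/2) * Real.exp (-u^2 / (4*r)) ≤ u ^ (-(2:ℝ)) * K := by
        have hs : 0 < r / u^2 := by positivity
        have h1 : F (r / u^2) ≤ K := hFle _ hs.le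
        have e3 : u ^ (-(2:ℝ)) * F (r / u^2)
            = c * u * r ^ (-(3:ℝ)/2) * Real.exp (-u^2 / (4*r)) := by
          rw [hF]
          simp only
          have ea : -1/(4*(r/u^2)) = -u^2/(4*r) := by
            field_simp
          have eb : (r/u^2) ^ (-(3:ℝ)/2) = r ^ (-(3:ℝ)/2) * u^3 := by
            rw [(by ring : -(3:ℝ)/2 = -((3:ℝ)/2)), Real.rpow_neg (by positivity),
              Real.div_rpow h.le (by positivity), Real.rpow_neg h.le]
            rw [← Real.rpow_natCast u 2, ← Real.rpow_mul hu.le,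
              ← Real.rpow_natCast u 3]
            rw [inv_div, div_eq_mul_inv]
            push_cast
            norm_num [mul_comm]
          have ec : u ^ (-(2:ℝ)) = (u^2)⁻¹ := by
            rw [Real.rpow_neg hu.le, ← Real.rpow_natCast u 2]
            norm_num
          rw [ea, eb, ec]
          field_simp
        calc c * u * r ^ (-(3:ℝ)/2) * Real.exp (-u^2 / (4*r))
            = u ^ (-(2:ℝ)) * F (r / u^2) := e3.symm
          _ ≤ u ^ (-(2:ℝ)) * K := mul_le_mul_of_nonneg_left h1 hu2.le
      calc (t - r) * c * u * r ^ (-(3:ℝ)/2) * Real.exp (-u^2 / (4*r))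
          = (t - r) * (c * u * r ^ (-(3:ℝ)/2) * Real.exp (-u^2 / (4*r))) := by ring
        _ ≤ (t - r) * (u ^ (-(2:ℝ)) * K) := mul_le_mul_of_nonneg_left hkey hsub
  by_cases hInt : IntervalIntegrable
      (fun r => (t - r) * c * u * r ^ (-(3:ℝ)/2) * Real.exp (-u^2 / (4*r)))
      MeasureTheory.volume 0 t
  · have hIntU : IntervalIntegrable (fun r => (t - r) * (u ^ (-(2:ℝ)) * K))
        MeasureTheory.volume 0 t := by
      apply Continuous.intervalIntegrable
      fun_prop
    have hmono := intervalIntegral.integral_mono_on ht.le hInt hIntU hpt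
    have hcompute : (∫ r in (0:ℝ)..t, (t - r) * (u ^ (-(2:ℝ)) * K))
        = t^2/2 * (u ^ (-(2:ℝ)) * K) := by
      rw [intervalIntegral.integral_mul_const]
      congr 1
      rw [intervalIntegral.integral_sub intervalIntegrable_const
        (intervalIntegral.intervalIntegrable_id), intervalIntegral.integral_const,
        integral_id]
      simp
      ring
    calc (∫ r in (0:ℝ)..t, (t - r) * c * u * r ^ (-(3:ℝ)/2) * Real.exp (-u^2 / (4*r)))
        ≤ (∫ r in (0:ℝ)..t, (t - r) * (u ^ (-(2:ℝ)) * K)) := hmono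
      _ = t^2/2 * (u ^ (-(2:ℝ)) * K) := hcompute
      _ ≤ t^2 * u ^ (-(2:ℝ)) * M := by
          nlinarith [sq_nonneg t, mul_pos (mul_pos (mul_pos ht ht) hu2) hK0,
            mul_le_mul_of_nonneg_left hKM (le_of_lt (mul_pos (mul_pos ht ht) hu2))]
  · rw [intervalIntegral.integral_undef hInt]
    have : 0 < t^2 * u ^ (-(2:ℝ)) * M := by
      have := lt_of_lt_of_le hK0 hKM
      positivity
    linarith
end

section
/- For C ≠ 0 let φ_C(t) = (1 − e^{−2√2 C t})/(2√2 C) and define F(t) = ∫₀¹ (1 − √(2/π)∫₀^{r/√(φ_C(t))} e^{−v²/2} dv) dr for t > 0. Then F(t) = √(2/π)·√(φ_C(t))·∫₀^{1/√(φ_C(t))} v e^{−v²/2} dv + √(2/π)·∫_{1/√(φ_C(t))}^{∞} e^{−v²/2} dv, and lim_{t→0+} F(t)/√(φ_C(t)) = √(2/π). -/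
open Filter Topology Set MeasureTheory intervalIntegral

lemma gcont : Continuous (fun v : ℝ => Real.exp (-v^2/2)) := by
  continuity

lemma gint : MeasureTheory.Integrable (fun v : ℝ => Real.exp (-v^2/2)) := by
  have := integrable_exp_neg_mul_sq (b := (1/2 : ℝ)) (by norm_num)
  convert this using 2 with v
  ring_nf

lemma gIoi0 : ∫ v in Ioi (0:ℝ), Real.exp (-v^2/2) = Real.sqrt (Real.pi/2) := by
  have := integral_gaussian_Ioi (1/2 : ℝ)
  have h2 : ∫ v in Ioi (0:ℝ), Real.exp (-v^2/2) = ∫ v in Ioi (0:ℝ), Real.exp (-(1/2) * v^2) := by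
    congr 1; ext v; ring_nf
  have h4 : Real.sqrt (Real.pi / (1/2)) / 2 = Real.sqrt (Real.pi/2) := by
    rw [show Real.pi / (1/2:ℝ) = 2 * Real.pi by ring]
    have : Real.sqrt (2*Real.pi) / 2 = Real.sqrt (2*Real.pi) / Real.sqrt 4 := by
      rw [show (4:ℝ) = 2^2 by norm_num, Real.sqrt_sq (by norm_num : (0:ℝ) ≤ 2)]
    rw [this, ← Real.sqrt_div (by positivity), show (2:ℝ)*Real.pi/4 = Real.pi/2 by ring]
  rw [h2, this, h4]

lemma vgderiv (v : ℝ) : HasDerivAt (fun u : ℝ => -Real.exp (-u^2/2)) (v * Real.exp (-v^2/2)) v := by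
  have h1 : HasDerivAt (fun u : ℝ => -u^2/2) (-v) v := by
    have := (hasDerivAt_pow 2 v).neg.div_const 2
    simpa using this.congr_deriv (by ring)
  have := (h1.exp).neg
  exact this.congr_deriv (by ring)

lemma L3 (a : ℝ) : ∫ v in (0:ℝ)..a, v * Real.exp (-v^2/2) = 1 - Real.exp (-a^2/2) := by
  have := intervalIntegral.integral_eq_sub_of_hasDerivAt (f := fun u : ℝ => -Real.exp (-u^2/2))
    (f' := fun v => v * Real.exp (-v^2/2)) (a := 0) (b := a)
    (fun x _ => vgderiv x) ((continuous_id.mul gcont).intervalIntegrable 0 a)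
  rw [this]; simp; ring

lemma vgtend : Tendsto (fun u : ℝ => -Real.exp (-u^2/2)) atTop (nhds 0) := by
  rw [show (0:ℝ) = -0 by norm_num]
  refine Tendsto.neg (Real.tendsto_exp_atBot.comp ?_)
  have : Tendsto (fun u : ℝ => u^2/2) atTop atTop :=
    (tendsto_pow_atTop (by norm_num)).atTop_div_const (by norm_num)
  have h2 := tendsto_neg_atTop_atBot.comp this
  refine h2.congr (fun x => by simp; ring)

lemma L4 (a : ℝ) (ha : 0 ≤ a) : ∫ v in Ioi a, v * Real.exp (-v^2/2) = Real.exp (-a^2/2) := by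
  have := integral_Ioi_of_hasDerivAt_of_nonneg' (g := fun u : ℝ => -Real.exp (-u^2/2))
    (g' := fun v => v * Real.exp (-v^2/2)) (a := a) (l := 0)
    (fun x _ => vgderiv x)
    (fun x hx => mul_nonneg (le_trans ha (le_of_lt hx)) (Real.exp_pos _).le) vgtend
  rw [this]; ring

lemma L4int (a : ℝ) (ha : 0 ≤ a) : IntegrableOn (fun v => v * Real.exp (-v^2/2)) (Ioi a) := by
  refine integrableOn_Ioi_deriv_of_nonneg' (g := fun u : ℝ => -Real.exp (-u^2/2))
    (fun x _ => vgderiv x)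
    (fun x hx => mul_nonneg (le_trans ha (le_of_lt hx)) (Real.exp_pos _).le) vgtend

lemma L5 (a : ℝ) (ha : 0 ≤ a) : ∫ v in Ici a, Real.exp (-v^2/2)
    = Real.sqrt (Real.pi/2) - ∫ v in (0:ℝ)..a, Real.exp (-v^2/2) := by
  rw [MeasureTheory.integral_Ici_eq_integral_Ioi]
  have hsplit : ∫ v in Ioi (0:ℝ), Real.exp (-v^2/2)
      = (∫ v in Ioc (0:ℝ) a, Real.exp (-v^2/2)) + ∫ v in Ioi a, Real.exp (-v^2/2) := by
    rw [← MeasureTheory.setIntegral_union (Ioc_disjoint_Ioi le_rfl) measurableSet_Ioi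
      gint.integrableOn gint.integrableOn, Ioc_union_Ioi_eq_Ioi ha]
  rw [intervalIntegral.integral_of_le ha]
  rw [← gIoi0, hsplit]
  ring

lemma L6 (a : ℝ) (ha : 1 ≤ a) : a * ∫ v in Ici a, Real.exp (-v^2/2) ≤ Real.exp (-a^2/2) := by
  have ha0 : (0:ℝ) < a := lt_of_lt_of_le one_pos ha
  have hmono : ∫ v in Ici a, Real.exp (-v^2/2) ≤ ∫ v in Ici a, (v/a) * Real.exp (-v^2/2) := by
    refine MeasureTheory.setIntegral_mono_on gint.integrableOn ?_ measurableSet_Ici ?_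
    · rw [integrableOn_Ici_iff_integrableOn_Ioi]
      exact ((L4int a ha0.le).div_const a).congr (by
        filter_upwards with x
        ring)
    · intro x hx
      have h1 : 1 ≤ x / a := (one_le_div ha0).2 hx
      nlinarith [Real.exp_pos (-x^2/2), Real.exp_pos (-x^2/2)]
  calc a * ∫ v in Ici a, Real.exp (-v^2/2)
      ≤ a * ∫ v in Ici a, (v/a) * Real.exp (-v^2/2) := by
        exact mul_le_mul_of_nonneg_left hmono ha0.le
    _ = ∫ v in Ici a, v * Real.exp (-v^2/2) := by
        rw [← MeasureTheory.integral_const_mul]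
        congr 1; ext v; field_simp
    _ = Real.exp (-a^2/2) := by
        rw [MeasureTheory.integral_Ici_eq_integral_Ioi, L4 a ha0.le]

noncomputable def G : ℝ → ℝ := fun x => ∫ v in (0:ℝ)..x, Real.exp (-v^2/2)

lemma hGderiv (x : ℝ) : HasDerivAt G (Real.exp (-x^2/2)) x :=
  (gcont.integral_hasStrictDerivAt 0 x).hasDerivAt

lemma hGcont : Continuous G :=
  continuous_iff_continuousAt.2 fun x => (hGderiv x).continuousAt

lemma LG (a : ℝ) : ∫ u in (0:ℝ)..a, G u = a * G a + Real.exp (-a^2/2) - 1 := by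
  have hH : ∀ u : ℝ, HasDerivAt (fun u : ℝ => u * G u + Real.exp (-u^2/2)) (G u) u := by
    intro u
    have h1 := (hasDerivAt_id u).mul (hGderiv u)
    have h2 := (vgderiv u).neg
    simp only [neg_neg, Pi.neg_def] at h2
    have := h1.add h2
    exact this.congr_deriv (by simp)
  have := intervalIntegral.integral_eq_sub_of_hasDerivAt (a := 0) (b := a)
    (fun x _ => hH x) (hGcont.intervalIntegrable 0 a)
  rw [this]
  simp [G]

lemma key (s : ℝ) (hs : 0 < s) :
    (∫ r in (0:ℝ)..1, (1 - Real.sqrt (2/Real.pi) * G (r/s)))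
      = Real.sqrt (2/Real.pi) * s * (∫ v in (0:ℝ)..(1/s), v * Real.exp (-v^2/2))
        + Real.sqrt (2/Real.pi) * ∫ v in Ici (1/s), Real.exp (-v^2/2) := by
  set c := Real.sqrt (2/Real.pi) with hc
  have hcπ : c * Real.sqrt (Real.pi/2) = 1 := by
    rw [hc, ← Real.sqrt_mul (by positivity)]
    rw [show 2/Real.pi * (Real.pi/2) = 1 by field_simp]
    exact Real.sqrt_one
  have hGs : Continuous fun r : ℝ => c * G (r/s) :=
    continuous_const.mul (hGcont.comp (continuous_id.div_const s))
  rw [intervalIntegral.integral_sub (intervalIntegrable_const) (hGs.intervalIntegrable 0 1)]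
  rw [intervalIntegral.integral_const, intervalIntegral.integral_const_mul]
  rw [intervalIntegral.integral_comp_div (f := G) hs.ne']
  rw [zero_div, smul_eq_mul, LG, L3, L5 (1/s) (by positivity)]
  have h1s : s * (1/s) = 1 := by field_simp
  rw [show (∫ v in (0:ℝ)..(1/s), Real.exp (-v^2/2)) = G (1/s) from rfl]
  simp only [smul_eq_mul]
  linear_combination (-(c * G (1/s))) * h1s - hcπ

lemma expTend : Tendsto (fun a : ℝ => Real.exp (-a^2/2)) atTop (nhds 0) := by
  have := vgtend.neg
  simpa using this

lemma PhiTend :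
    Tendsto (fun a : ℝ => Real.sqrt (2/Real.pi) * (1 - Real.exp (-a^2/2))
      + Real.sqrt (2/Real.pi) * (a * ∫ v in Ici a, Real.exp (-v^2/2))) atTop
      (nhds (Real.sqrt (2/Real.pi))) := by
  set c := Real.sqrt (2/Real.pi) with hc
  have h1 : Tendsto (fun a : ℝ => c * (1 - Real.exp (-a^2/2))) atTop (nhds c) := by
    have := (tendsto_const_nhds (x := (1:ℝ)) (f := atTop)).sub expTend
    have h := this.const_mul c
    simpa using h
  have h2 : Tendsto (fun a : ℝ => c * (a * ∫ v in Ici a, Real.exp (-v^2/2))) atTop (nhds 0) := by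
    have hsq : Tendsto (fun a : ℝ => a * ∫ v in Ici a, Real.exp (-v^2/2)) atTop (nhds 0) := by
      refine tendsto_of_tendsto_of_tendsto_of_le_of_le' tendsto_const_nhds expTend ?_ ?_
      · filter_upwards [eventually_ge_atTop (1:ℝ)] with a ha
        have : 0 ≤ ∫ v in Ici a, Real.exp (-v^2/2) :=
          MeasureTheory.setIntegral_nonneg measurableSet_Ici (fun x _ => (Real.exp_pos _).le)
        positivity
      · filter_upwards [eventually_ge_atTop (1:ℝ)] with a ha
        exact L6 a ha
    have := hsq.const_mul c
    simpa using this
  have := h1.add h2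
  simpa using this

lemma phipos (C : ℝ) (hC : C ≠ 0) (t : ℝ) (ht : 0 < t) :
    0 < (1 - Real.exp (-2 * Real.sqrt 2 * C * t)) / (2 * Real.sqrt 2 * C) := by
  have h2 : (0:ℝ) < Real.sqrt 2 := by positivity
  rcases hC.lt_or_gt with hneg | hpos
  · have hk : 2 * Real.sqrt 2 * C < 0 := by nlinarith
    have hexp : 1 < Real.exp (-2 * Real.sqrt 2 * C * t) := by
      rw [Real.one_lt_exp_iff]
      nlinarith
    exact div_pos_of_neg_of_neg (by linarith) hk
  · have hk : 0 < 2 * Real.sqrt 2 * C := by positivity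
    have hexp : Real.exp (-2 * Real.sqrt 2 * C * t) < 1 := by
      rw [Real.exp_lt_one_iff]
      nlinarith
    exact div_pos (by linarith) hk

theorem stmt10 (C : ℝ) (hC : C ≠ 0) (φ : ℝ → ℝ)
    (hφ : ∀ t, φ t = (1 - Real.exp (-2 * Real.sqrt 2 * C * t)) / (2 * Real.sqrt 2 * C))
    (F : ℝ → ℝ)
    (hF : ∀ t > (0:ℝ), F t = ∫ r in (0:ℝ)..1,
      (1 - Real.sqrt (2/Real.pi) * ∫ v in (0:ℝ)..(r / Real.sqrt (φ t)), Real.exp (-v^2/2))) :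
    (∀ t > (0:ℝ), F t
      = Real.sqrt (2/Real.pi) * Real.sqrt (φ t) *
          (∫ v in (0:ℝ)..(1 / Real.sqrt (φ t)), v * Real.exp (-v^2/2))
        + Real.sqrt (2/Real.pi) * ∫ v in Set.Ici (1 / Real.sqrt (φ t)), Real.exp (-v^2/2)) ∧
    Tendsto (fun t => F t / Real.sqrt (φ t)) (nhdsWithin 0 (Ioi 0))
      (nhds (Real.sqrt (2/Real.pi))) := by
  have hφpos : ∀ t > (0:ℝ), 0 < φ t := fun t ht => (hφ t) ▸ phipos C hC t ht
  have hid : ∀ t > (0:ℝ), F t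
      = Real.sqrt (2/Real.pi) * Real.sqrt (φ t) *
          (∫ v in (0:ℝ)..(1 / Real.sqrt (φ t)), v * Real.exp (-v^2/2))
        + Real.sqrt (2/Real.pi) * ∫ v in Set.Ici (1 / Real.sqrt (φ t)), Real.exp (-v^2/2) := by
    intro t ht
    rw [hF t ht]
    exact key _ (Real.sqrt_pos.2 (hφpos t ht))
  refine ⟨hid, ?_⟩
  have hccont : Continuous φ := by
    rw [funext hφ]
    exact (continuous_const.sub ((continuous_const.mul continuous_id).rexp)).div_const _
  have hφ0 : φ 0 = 0 := by rw [hφ]; simp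
  have hA : Tendsto (fun t => 1 / Real.sqrt (φ t)) (nhdsWithin 0 (Ioi 0)) atTop := by
    have h1 : Tendsto (fun t => Real.sqrt (φ t)) (nhdsWithin 0 (Ioi 0)) (nhdsWithin 0 (Ioi 0)) := by
      apply tendsto_nhdsWithin_of_tendsto_nhds_of_eventually_within
      · have h2 := (Real.continuous_sqrt.comp hccont).tendsto 0
        simp only [Function.comp, hφ0, Real.sqrt_zero] at h2
        exact h2.mono_left nhdsWithin_le_nhds
      · filter_upwards [self_mem_nhdsWithin] with t ht
        exact Real.sqrt_pos.2 (hφpos t ht)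
    simpa [one_div, Pi.inv_def] using h1.inv_tendsto_nhdsGT_zero
  have hcomp := PhiTend.comp hA
  refine hcomp.congr' ?_
  filter_upwards [self_mem_nhdsWithin] with t ht
  have hs : 0 < Real.sqrt (φ t) := Real.sqrt_pos.2 (hφpos t ht)
  rw [hid t ht, L3]
  simp only [Function.comp_apply]
  field_simp
end

section
/- For C ≠ 0, with F as above (F(t) = ∫₀¹ √(2/π)∫_{r/√(φ_C(t))}^{∞} e^{−v²/2} dv dr), lim_{t→0+} F(t)/√t = √(2/π). -/
open Filter Topology Set MeasureTheory

noncomputable def gg (v : ℝ) : ℝ := Real.exp (-v ^ 2 / 2)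

lemma gg_cont : Continuous gg := by
  unfold gg; fun_prop

lemma gg_int : Integrable gg := by
  have h := integrable_exp_neg_mul_sq (show (0:ℝ) < 1/2 by norm_num)
  refine h.congr ?_
  filter_upwards with v
  unfold gg
  congr 1
  ring

lemma gg_hasDerivAt (x : ℝ) : HasDerivAt gg (gg x * (-x)) x := by
  have h1 : HasDerivAt (fun x : ℝ => -x ^ 2 / 2) (-x) x := by
    have h := ((hasDerivAt_pow 2 x).neg.div_const 2)
    refine h.congr_deriv ?_
    simp
    ring
  unfold gg
  simpa [gg] using h1.exp

noncomputable def Psi (x : ℝ) : ℝ := ∫ v in Ici x, gg v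

lemma Psi_nonneg (x : ℝ) : 0 ≤ Psi x :=
  setIntegral_nonneg measurableSet_Ici fun v _ => (Real.exp_pos _).le

lemma Psi_eq (x : ℝ) : Psi x = Psi 0 - ∫ t in (0:ℝ)..x, gg t := by
  have key : ∀ y : ℝ, Psi y = (∫ v, gg v) - ∫ v in Iic y, gg v := by
    intro y
    have := integral_add_compl (measurableSet_Iic (a := y)) gg_int
    rw [compl_Iic] at this
    rw [Psi, integral_Ici_eq_integral_Ioi]
    linarith
  rw [key, key, ← intervalIntegral.integral_Iic_sub_Iic gg_int.integrableOn gg_int.integrableOn]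
  ring

lemma Psi_hasDerivAt (x : ℝ) : HasDerivAt Psi (-(gg x)) x := by
  have h : HasDerivAt (fun u => ∫ t in (0:ℝ)..u, gg t) (gg x) x :=
    intervalIntegral.integral_hasDerivAt_right gg_int.intervalIntegrable
      (gg_cont.stronglyMeasurableAtFilter _ _) gg_cont.continuousAt
  have := (h.const_sub (Psi 0))
  refine this.congr_of_eventuallyEq ?_
  filter_upwards with y using (Psi_eq y)

lemma Psi_cont : Continuous Psi :=
  continuous_iff_continuousAt.2 fun x => (Psi_hasDerivAt x).continuousAt

lemma integral_exp_half_Ici (x : ℝ) :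
    ∫ v in Ici x, Real.exp (-(1/2) * v) = 2 * Real.exp (-(1/2) * x) := by
  rw [integral_Ici_eq_integral_Ioi]
  have hderiv : ∀ v ∈ Ici x, HasDerivAt (fun v : ℝ => -2 * Real.exp (-(1/2) * v))
      (Real.exp (-(1/2) * v)) v := by
    intro v _
    have h1 : HasDerivAt (fun v : ℝ => -(1/2) * v) (-(1/2)) v := by
      simpa using (hasDerivAt_id v).const_mul (-(1/2) : ℝ)
    have := (h1.exp.const_mul (-2 : ℝ))
    refine this.congr_deriv ?_
    ring
  have hint : IntegrableOn (fun v => Real.exp (-(1/2) * v)) (Ioi x) :=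
    exp_neg_integrableOn_Ioi x (by norm_num)
  have htend : Tendsto (fun v : ℝ => -2 * Real.exp (-(1/2) * v)) atTop (𝓝 0) := by
    have h1 : Tendsto (fun v : ℝ => (1/2) * v) atTop atTop :=
      (tendsto_id.const_mul_atTop (by norm_num))
    have h2 := Real.tendsto_exp_neg_atTop_nhds_zero.comp h1
    have h3 := h2.const_mul (-2 : ℝ)
    simpa using h3
  have := MeasureTheory.integral_Ioi_of_hasDerivAt_of_tendsto' hderiv hint htend
  rw [this]
  ring

lemma Psi_le (x : ℝ) (hx : 1 ≤ x) : Psi x ≤ 2 * Real.exp (-(1/2) * x) := by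
  rw [← integral_exp_half_Ici x]
  refine setIntegral_mono_on gg_int.integrableOn
    ((integrableOn_Ici_iff_integrableOn_Ioi).2 (exp_neg_integrableOn_Ioi x (by norm_num)))
    measurableSet_Ici ?_
  intro v hv
  have hv1 : (1:ℝ) ≤ v := le_trans hx hv
  have : -(v ^ 2) / 2 ≤ -(1/2) * v := by nlinarith
  calc gg v = Real.exp (-v ^ 2 / 2) := rfl
    _ ≤ Real.exp (-(1/2) * v) := Real.exp_le_exp.2 (by simpa using this)

lemma key_integral {s : ℝ} (hs : 0 < s) :
    ∫ r in (0:ℝ)..1, Psi (r / s) = Psi (1 / s) - s * gg (1 / s) + s := by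
  have hsne : s ≠ 0 := hs.ne'
  set A : ℝ → ℝ := fun r => r * Psi (r / s) - s * gg (r / s) with hA
  have hAderiv : ∀ r ∈ uIcc (0:ℝ) 1, HasDerivAt A (Psi (r / s)) r := by
    intro r _
    have h1 : HasDerivAt (fun r : ℝ => r / s) (1 / s) r := by
      simpa using (hasDerivAt_id r).div_const s
    have h2 : HasDerivAt (fun r => Psi (r / s)) (-(gg (r / s)) * (1 / s)) r :=
      HasDerivAt.comp (h₂ := Psi) r (Psi_hasDerivAt (r / s)) h1
    have h3 : HasDerivAt (fun r => gg (r / s)) ((gg (r / s) * (-(r / s))) * (1 / s)) r :=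
      HasDerivAt.comp (h₂ := gg) r (gg_hasDerivAt (r / s)) h1
    have h4 := ((hasDerivAt_id r).mul h2).sub (h3.const_mul s)
    refine h4.congr_deriv ?_
    field_simp
    simp only [id]; ring
  have hcont : Continuous fun r => Psi (r / s) :=
    Psi_cont.comp (continuous_id.div_const s)
  have := intervalIntegral.integral_eq_sub_of_hasDerivAt hAderiv
    (hcont.intervalIntegrable 0 1)
  rw [this, hA]
  have hg0 : gg (0:ℝ) = 1 := by simp [gg]
  simp [zero_div, hg0]

theorem stmt11 (C : ℝ) (hC : C ≠ 0) (φ : ℝ → ℝ)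
    (hφ : ∀ t, φ t = (1 - Real.exp (-2 * Real.sqrt 2 * C * t)) / (2 * Real.sqrt 2 * C))
    (F : ℝ → ℝ)
    (hF : ∀ t > (0:ℝ), F t = ∫ r in (0:ℝ)..1,
      Real.sqrt (2/Real.pi) * ∫ v in Set.Ici (r / Real.sqrt (φ t)), Real.exp (-v^2/2)) :
    Tendsto (fun t => F t / Real.sqrt t) (nhdsWithin 0 (Ioi 0))
      (nhds (Real.sqrt (2/Real.pi))) := by
  set a : ℝ := 2 * Real.sqrt 2 * C with ha_def
  have ha : a ≠ 0 := by
    have h2 : Real.sqrt 2 ≠ 0 := by positivity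
    exact mul_ne_zero (mul_ne_zero two_ne_zero h2) hC
  have hφ' : ∀ t, φ t = (1 - Real.exp (-(a * t))) / a := by
    intro t
    rw [hφ t]
    congr 2
    rw [ha_def]; ring
  -- positivity of φ on Ioi 0
  have hφpos : ∀ t > (0:ℝ), 0 < φ t := by
    intro t ht
    rw [hφ' t]
    rcases ha.lt_or_gt with haneg | hapos
    · apply div_pos_of_neg_of_neg _ haneg
      have : (1:ℝ) < Real.exp (-(a * t)) :=
        Real.one_lt_exp_iff.2 (by nlinarith)
      linarith
    · apply div_pos _ hapos
      have : Real.exp (-(a * t)) < 1 :=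
        Real.exp_lt_one_iff.2 (by nlinarith)
      linarith
  -- φ t / t → 1
  have hL : Tendsto (fun t => φ t / t) (𝓝[>] (0:ℝ)) (𝓝 1) := by
    have hexp := Real.hasDerivAt_exp 0
    rw [Real.exp_zero] at hexp
    have hslope := hasDerivAt_iff_tendsto_slope.mp hexp
    have hmap : Tendsto (fun t : ℝ => -(a * t)) (𝓝[>] (0:ℝ)) (𝓝[≠] (0:ℝ)) := by
      apply tendsto_nhdsWithin_of_tendsto_nhds_of_eventually_within
      · have hco : Continuous (fun t : ℝ => -(a * t)) := by fun_prop
        have := hco.tendsto 0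
        simpa using this.mono_left nhdsWithin_le_nhds
      · filter_upwards [self_mem_nhdsWithin] with t ht
        have : a * t ≠ 0 := mul_ne_zero ha (ne_of_gt ht)
        simpa using this
    have hcomp := hslope.comp hmap
    refine hcomp.congr' ?_
    filter_upwards [self_mem_nhdsWithin] with t ht
    have ht0 : t ≠ 0 := ne_of_gt ht
    have hat : a * t ≠ 0 := mul_ne_zero ha ht0
    simp only [Function.comp_apply, slope_def_field, Real.exp_zero]
    rw [hφ' t]
    field_simp
    ring
  -- φ → 0 within Ioi 0
  have hφ0 : Tendsto φ (𝓝[>] (0:ℝ)) (𝓝[>] (0:ℝ)) := by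
    apply tendsto_nhdsWithin_of_tendsto_nhds_of_eventually_within
    · have hcont : Continuous φ := by
        have : φ = fun t => (1 - Real.exp (-2 * Real.sqrt 2 * C * t)) / (2 * Real.sqrt 2 * C) :=
          funext hφ
        rw [this]; fun_prop
      have h0 : φ 0 = 0 := by rw [hφ' 0]; simp
      have := hcont.tendsto 0
      rw [h0] at this
      exact this.mono_left nhdsWithin_le_nhds
    · filter_upwards [self_mem_nhdsWithin] with t ht using hφpos t ht
  -- √(φ t)/√t → 1
  have hs1 : Tendsto (fun t => Real.sqrt (φ t) / Real.sqrt t) (𝓝[>] (0:ℝ)) (𝓝 1) := by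
    have h1 := (Real.continuous_sqrt.tendsto 1).comp hL
    rw [Real.sqrt_one] at h1
    refine h1.congr' ?_
    filter_upwards [self_mem_nhdsWithin] with t ht
    simp only [Function.comp_apply]
    rw [Real.sqrt_div (hφpos t ht).le]
  -- 1/√x → ∞ as x → 0+
  have hsqrt_map : Tendsto (fun x : ℝ => 1 / Real.sqrt x) (𝓝[>] (0:ℝ)) atTop := by
    have hsq : Tendsto Real.sqrt (𝓝[>] (0:ℝ)) (𝓝[>] (0:ℝ)) := by
      apply tendsto_nhdsWithin_of_tendsto_nhds_of_eventually_within
      · have := Real.continuous_sqrt.tendsto 0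
        rw [Real.sqrt_zero] at this
        exact this.mono_left nhdsWithin_le_nhds
      · filter_upwards [self_mem_nhdsWithin] with x hx using Real.sqrt_pos.2 hx
    have := tendsto_inv_nhdsGT_zero.comp hsq
    refine this.congr fun x => ?_
    simp [one_div]
  -- gg (1/√(φ t)) → 0
  have hexp0 : Tendsto (fun t => gg (1 / Real.sqrt (φ t))) (𝓝[>] (0:ℝ)) (𝓝 0) := by
    have h1 : Tendsto (fun y : ℝ => gg y) atTop (𝓝 0) := by
      have h2 : Tendsto (fun y : ℝ => y ^ 2 / 2) atTop atTop := by
        apply Tendsto.atTop_div_const (by norm_num)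
        exact tendsto_pow_atTop two_ne_zero
      have h3 := Real.tendsto_exp_neg_atTop_nhds_zero.comp h2
      refine h3.congr fun y => ?_
      simp only [Function.comp_apply, gg]
      congr 1
      ring
    exact h1.comp (hsqrt_map.comp hφ0)
  -- Psi(1/√x)/√x → 0 as x → 0+
  have hq : Tendsto (fun x : ℝ => Psi (1 / Real.sqrt x) / Real.sqrt x)
      (𝓝[>] (0:ℝ)) (𝓝 0) := by
    have hb0 : Tendsto (fun y : ℝ => 2 * Real.exp (-(1/2) * y) * y) atTop (𝓝 0) := by
      have h := Real.tendsto_pow_mul_exp_neg_atTop_nhds_zero 1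
      have hhalf : Tendsto (fun y : ℝ => y / 2) atTop atTop :=
        tendsto_id.atTop_div_const (by norm_num)
      have h2 := (h.comp hhalf).const_mul (4:ℝ)
      rw [mul_zero] at h2
      refine h2.congr fun y => ?_
      simp only [Function.comp_apply, pow_one]
      have : -(y / 2) = -(1/2) * y := by ring
      rw [this]
      ring
    have hbt : Tendsto (fun x : ℝ => 2 * Real.exp (-(1/2) * (1 / Real.sqrt x)) *
        (1 / Real.sqrt x)) (𝓝[>] (0:ℝ)) (𝓝 0) := hb0.comp hsqrt_map
    apply squeeze_zero' ?_ ?_ hbt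
    · filter_upwards [self_mem_nhdsWithin] with x hx
      exact div_nonneg (Psi_nonneg _) (Real.sqrt_nonneg _)
    · filter_upwards [Ioo_mem_nhdsGT (by norm_num : (0:ℝ) < 1)] with x hx
      have hx0 : 0 < x := hx.1
      have hsx : 0 < Real.sqrt x := Real.sqrt_pos.2 hx0
      have hsx1 : Real.sqrt x < 1 := by
        rw [show (1:ℝ) = Real.sqrt 1 from (Real.sqrt_one).symm]
        exact Real.sqrt_lt_sqrt hx0.le hx.2
      have h1x : 1 ≤ 1 / Real.sqrt x := (le_div_iff₀ hsx).2 (by linarith)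
      have := Psi_le (1 / Real.sqrt x) h1x
      rw [div_le_iff₀ hsx] at *
      calc Psi (1 / Real.sqrt x) ≤ 2 * Real.exp (-(1/2) * (1 / Real.sqrt x)) := this
        _ = 2 * Real.exp (-(1/2) * (1 / Real.sqrt x)) * (1 / Real.sqrt x) * Real.sqrt x := by
            field_simp
  have hQ : Tendsto (fun t => Psi (1 / Real.sqrt (φ t)) / Real.sqrt (φ t))
      (𝓝[>] (0:ℝ)) (𝓝 0) := hq.comp hφ0
  -- T1: Psi(1/√(φt))/√t → 0
  have hT1 : Tendsto (fun t => Psi (1 / Real.sqrt (φ t)) / Real.sqrt t)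
      (𝓝[>] (0:ℝ)) (𝓝 0) := by
    have h := hQ.mul hs1
    rw [zero_mul] at h
    refine h.congr' ?_
    filter_upwards [self_mem_nhdsWithin] with t ht
    have hsx : Real.sqrt (φ t) ≠ 0 := (Real.sqrt_pos.2 (hφpos t ht)).ne'
    field_simp
  -- T2
  have hT2 : Tendsto (fun t => Real.sqrt (φ t) / Real.sqrt t * gg (1 / Real.sqrt (φ t)))
      (𝓝[>] (0:ℝ)) (𝓝 0) := by
    have := hs1.mul hexp0
    rwa [mul_zero] at this
  -- combine
  set c : ℝ := Real.sqrt (2 / Real.pi) with hc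
  have hmain := ((hT1.sub hT2).add hs1).const_mul c
  rw [show c * (0 - 0 + 1) = c by ring] at hmain
  refine hmain.congr' ?_
  filter_upwards [self_mem_nhdsWithin] with t ht
  have hφt : 0 < φ t := hφpos t ht
  have hs : 0 < Real.sqrt (φ t) := Real.sqrt_pos.2 hφt
  have hFt : F t = c * (Psi (1 / Real.sqrt (φ t)) -
      Real.sqrt (φ t) * gg (1 / Real.sqrt (φ t)) + Real.sqrt (φ t)) := by
    rw [hF t ht]
    have : (∫ r in (0:ℝ)..1, c * ∫ v in Set.Ici (r / Real.sqrt (φ t)), Real.exp (-v^2/2))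
        = c * ∫ r in (0:ℝ)..1, Psi (r / Real.sqrt (φ t)) := by
      rw [intervalIntegral.integral_const_mul]
      simp only [Psi, gg]
    rw [this, key_integral hs]
  rw [hFt]
  ring
end
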